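/- In the aging branching process with a_n → ∞, the ratio m_{n+1}/m_n converges to m+1 as n → ∞, where m_n = E[Z_n]. Consequently, for each fixed k, m_{n-k}/m_n → (m+1)^{-k}. -/

import Mathlib

open MeasureTheory ProbabilityTheory Filter
open scoped ENNReal

private lemma nat_lintegral_eq_tsum {Ω : Type*} [MeasurableSpace Ω] (μ : Measure Ω)
    (N : Ω → ℕ) (hN : Measurable N) :
    ∫⁻ ω, (N ω : ℝ≥0∞) ∂μ = ∑' j : ℕ, μ {ω | j < N ω} := by
  have hSet : ∀ j : ℕ, MeasurableSet {ω | j < N ω} := fun j => hN measurableSet_Ioi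
  have hpt : ∀ ω, (N ω : ℝ≥0∞) =
      ∑' j : ℕ, Set.indicator {ω' | j < N ω'} (fun _ => (1 : ℝ≥0∞)) ω := by
    intro ω
    rw [tsum_eq_sum (s := Finset.range (N ω))
      (by intro j hj; rw [Set.indicator_apply, if_neg]; simpa using Finset.mem_range.not.mp hj)]
    rw [Finset.sum_congr rfl (fun j hj => by
      rw [Set.indicator_apply, if_pos]; exact Finset.mem_range.mp hj)]
    simp
  calc ∫⁻ ω, (N ω : ℝ≥0∞) ∂μ
      = ∫⁻ ω, ∑' j : ℕ, Set.indicator {ω' | j < N ω'} (fun _ => (1 : ℝ≥0∞)) ω ∂μ :=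
        lintegral_congr hpt
    _ = ∑' j : ℕ, ∫⁻ ω, Set.indicator {ω' | j < N ω'} (fun _ => (1 : ℝ≥0∞)) ω ∂μ :=
        lintegral_tsum (fun j => ((measurable_const).indicator (hSet j)).aemeasurable)
    _ = ∑' j : ℕ, μ {ω | j < N ω} := by
        exact tsum_congr fun j => lintegral_indicator_one (hSet j)

private lemma wald {Ω : Type*} [MeasurableSpace Ω] (μ : Measure Ω)
    (N : Ω → ℕ) (hN : Measurable N)
    (S : ℕ → Ω → ℕ) (hS : ∀ j, Measurable (S j)) (c : ℝ≥0∞)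
    (hc : ∀ j, ∫⁻ ω, (S j ω : ℝ≥0∞) ∂μ = c)
    (hind : ∀ j, IndepFun N (S j) μ) :
    ∫⁻ ω, ((∑ j ∈ Finset.range (N ω), S j ω : ℕ) : ℝ≥0∞) ∂μ
      = c * ∫⁻ ω, (N ω : ℝ≥0∞) ∂μ := by
  have hSet : ∀ j : ℕ, MeasurableSet {ω | j < N ω} := fun j => hN measurableSet_Ioi
  have hpt : ∀ ω, ((∑ j ∈ Finset.range (N ω), S j ω : ℕ) : ℝ≥0∞) =
      ∑' j : ℕ, Set.indicator {ω' | j < N ω'} (fun ω' => (S j ω' : ℝ≥0∞)) ω := by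
    intro ω
    rw [tsum_eq_sum (s := Finset.range (N ω))
      (by intro j hj; rw [Set.indicator_apply, if_neg]; simpa using Finset.mem_range.not.mp hj)]
    rw [Nat.cast_sum]
    refine (Finset.sum_congr rfl fun j hj => ?_).symm
    rw [Set.indicator_apply, if_pos]; exact Finset.mem_range.mp hj
  have hcastS : ∀ j, Measurable fun ω => (S j ω : ℝ≥0∞) := fun j =>
    Measurable.comp (Measurable.of_discrete) (hS j)
  calc ∫⁻ ω, ((∑ j ∈ Finset.range (N ω), S j ω : ℕ) : ℝ≥0∞) ∂μ
      = ∑' j : ℕ, ∫⁻ ω, Set.indicator {ω' | j < N ω'} (fun ω' => (S j ω' : ℝ≥0∞)) ω ∂μ := by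
        rw [lintegral_congr hpt]
        exact lintegral_tsum (fun j => ((hcastS j).indicator (hSet j)).aemeasurable)
    _ = ∑' j : ℕ, μ {ω | j < N ω} * c := by
        refine tsum_congr fun j => ?_
        have heq : (fun ω => Set.indicator {ω' | j < N ω'} (fun ω' => (S j ω' : ℝ≥0∞)) ω)
            = fun ω => ((fun t : ℕ => if j < t then (1:ℝ≥0∞) else 0) ∘ N) ω
               * ((fun t : ℕ => (t : ℝ≥0∞)) ∘ S j) ω := by
          funext ω
          rw [Set.indicator_apply]
          by_cases h : j < N ω <;> simp [h, Function.comp]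
        rw [heq, lintegral_mul_eq_lintegral_mul_lintegral_of_indepFun''
          ((Measurable.comp Measurable.of_discrete hN)).aemeasurable
          ((Measurable.comp Measurable.of_discrete (hS j))).aemeasurable
          ((hind j).comp Measurable.of_discrete Measurable.of_discrete)]
        congr 1
        · have : (fun ω => ((fun t : ℕ => if j < t then (1:ℝ≥0∞) else 0) ∘ N) ω)
              = fun ω => Set.indicator {ω' | j < N ω'} (fun _ => (1:ℝ≥0∞)) ω := by
            funext ω; rw [Set.indicator_apply]; by_cases h : j < N ω <;> simp [h, Function.comp]
          rw [this]; exact lintegral_indicator_one (hSet j)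
        · exact hc j
    _ = (∑' j : ℕ, μ {ω | j < N ω}) * c := ENNReal.tsum_mul_right
    _ = c * ∫⁻ ω, (N ω : ℝ≥0∞) ∂μ := by
        rw [nat_lintegral_eq_tsum μ N hN, mul_comm]

/-- For the aging branching process without immigration with `a n → ∞`,
the ratio of consecutive means `m_{n+1}/m_n → m+1`; consequently, for each fixed `k`,
`m_{n-k}/m_n → (m+1)^{-k}`. -/
theorem stmt9 {Ω : Type*} [MeasurableSpace Ω] (μ : Measure Ω) [IsProbabilityMeasure μ]
    (m : ℝ) (hm : 0 < m)
    (a : ℕ → ℕ) (hamono : Monotone a) (hstep : ∀ n, a (n + 1) ≤ a n + 1)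
    (hainf : Tendsto a atTop atTop)
    (R : ℕ → ℕ → Ω → ℕ) (hRmeas : ∀ j n, Measurable (R j n))
    (hRid : ∀ j n, IdentDistrib (R j n) (R 0 0) μ μ)
    (hRmean : ∫⁻ ω, (R 0 0 ω : ℝ≥0∞) ∂μ = ENNReal.ofReal m)
    (Z : ℕ → ℕ → Ω → ℕ) (hZmeas : ∀ n b, Measurable (Z n b))
    (hZ00 : ∀ ω, Z 0 0 ω = 1) (hZ0 : ∀ b, 1 ≤ b → ∀ ω, Z 0 b ω = 0)
    (hshift : ∀ n b, 1 ≤ b → ∀ ω,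
      Z (n + 1) b ω = if b ≤ a (n + 1) then Z n (b - 1) ω else 0)
    (hnew : ∀ n ω, Z (n + 1) 0 ω =
      ∑ j ∈ Finset.range (∑ b ∈ Finset.range (a n + 1), Z n b ω), R j (n + 1) ω)
    (hindep : ∀ n, iIndepFun
      (fun o : Option ℕ =>
        o.elim (fun ω => ∑ b ∈ Finset.range (a n + 1), Z n b ω)
          (fun j => R j (n + 1))) μ)
    (ms : ℕ → ℝ)
    (hms : ∀ n, ms n =
      (∫⁻ ω, ((∑ b ∈ Finset.range (a n + 1), Z n b ω : ℕ) : ℝ≥0∞) ∂μ).toReal) :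
    Tendsto (fun n : ℕ => ms (n + 1) / ms n) atTop (nhds (m + 1)) ∧
      ∀ k : ℕ, Tendsto (fun n : ℕ => ms (n - k) / ms n) atTop
        (nhds ((m + 1 : ℝ)⁻¹ ^ k)) := by
  set c : ℝ≥0∞ := ENNReal.ofReal m with hc_def
  have hc0 : c ≠ 0 := by simp [hc_def, hm, ENNReal.ofReal_pos.mpr hm] -- fix later
  have hcT : c ≠ ⊤ := ENNReal.ofReal_ne_top
  set g : ℕ → ℕ → ℝ≥0∞ := fun n b => ∫⁻ ω, (Z n b ω : ℝ≥0∞) ∂μ with hg_def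
  set M : ℕ → ℝ≥0∞ := fun n => ∑ b ∈ Finset.range (a n + 1), g n b with hM_def
  have hcast : Measurable fun t : ℕ => (t : ℝ≥0∞) := Measurable.of_discrete
  have hMdef : ∀ n, ∫⁻ ω, ((∑ b ∈ Finset.range (a n + 1), Z n b ω : ℕ) : ℝ≥0∞) ∂μ = M n := by
    intro n
    simp_rw [Nat.cast_sum]
    exact lintegral_finset_sum _ (fun b _ => hcast.comp (hZmeas n b))
  have hmsM : ∀ n, ms n = (M n).toReal := fun n => by rw [hms n, hMdef n]
  -- mean of offspring step: Wald
  have hFrec : ∀ n, g (n+1) 0 = c * M n := by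
    intro n
    have hNmeas : Measurable fun ω => ∑ b ∈ Finset.range (a n + 1), Z n b ω :=
      Finset.measurable_sum _ (fun b _ => hZmeas n b)
    have hRlint : ∀ j, ∫⁻ ω, (R j (n+1) ω : ℝ≥0∞) ∂μ = c := by
      intro j
      rw [← hRmean]
      exact ((hRid j (n+1)).comp hcast).lintegral_eq
    have hindNj : ∀ j, IndepFun (fun ω => ∑ b ∈ Finset.range (a n + 1), Z n b ω)
        (R j (n+1)) μ := fun j =>
      (hindep n).indepFun (i := (none : Option ℕ)) (j := some j) (by simp)
    have hw := wald μ _ hNmeas (fun j => R j (n+1)) (fun j => hRmeas j (n+1)) c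
      hRlint hindNj
    calc g (n+1) 0 = ∫⁻ ω, ((∑ j ∈ Finset.range (∑ b ∈ Finset.range (a n + 1), Z n b ω),
          R j (n + 1) ω : ℕ) : ℝ≥0∞) ∂μ := by
          exact lintegral_congr fun ω => by rw [hnew n ω]
      _ = c * M n := by rw [hw, hMdef n]
  have hgshift : ∀ n b, 1 ≤ b → g (n+1) b = if b ≤ a (n+1) then g n (b-1) else 0 := by
    intro n b hb
    by_cases h : b ≤ a (n+1)
    · rw [if_pos h]
      exact lintegral_congr fun ω => by rw [hshift n b hb ω, if_pos h]
    · rw [if_neg h]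
      have : ∀ ω, ((Z (n+1) b ω : ℕ) : ℝ≥0∞) = 0 := by
        intro ω; rw [hshift n b hb ω, if_neg h]; simp
      simp only [hg_def]
      rw [lintegral_congr this, lintegral_zero]
  have hrec : ∀ n, M (n+1) = c * M n + ∑ b ∈ Finset.range (a (n+1)), g n b := by
    intro n
    have : M (n+1) = ∑ b ∈ Finset.range (a (n+1)), g (n+1) (b+1) + g (n+1) 0 :=
      Finset.sum_range_succ' _ _
    rw [this, hFrec n, add_comm]
    congr 1
    refine Finset.sum_congr rfl fun b hb => ?_
    rw [hgshift n (b+1) (by omega),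
      if_pos (show b+1 ≤ a (n+1) from Finset.mem_range.mp hb), Nat.add_sub_cancel]
  have hupper : ∀ n, M (n+1) ≤ (1 + c) * M n := by
    intro n
    rw [hrec n, add_mul, one_mul]
    have hsum : (∑ b ∈ Finset.range (a (n+1)), g n b) ≤ M n := by
      simp only [hM_def]
      exact Finset.sum_le_sum_of_subset (Finset.range_subset_range.mpr (hstep n))
    calc c * M n + (∑ b ∈ Finset.range (a (n+1)), g n b) ≤ c * M n + M n :=
          add_le_add le_rfl hsum
      _ = M n + c * M n := add_comm _ _
  have hlower : ∀ n, (1 + c) * M n ≤ M (n+1) + g n (a n) := by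
    intro n
    rw [hrec n, add_mul, one_mul]
    have h1 : M n ≤ (∑ b ∈ Finset.range (a (n+1)), g n b) + g n (a n) := by
      have hMn : M n = ∑ b ∈ Finset.range (a n), g n b + g n (a n) := by
        simp only [hM_def]; exact Finset.sum_range_succ _ _
      rw [hMn]
      refine add_le_add ?_ le_rfl
      exact Finset.sum_le_sum_of_subset
        (Finset.range_subset_range.mpr (hamono (Nat.le_succ n)))
    calc M n + c * M n ≤ ((∑ b ∈ Finset.range (a (n+1)), g n b) + g n (a n)) + c * M n :=
          add_le_add h1 le_rfl
      _ = c * M n + (∑ b ∈ Finset.range (a (n+1)), g n b) + g n (a n) := by ring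
  have hunwind : ∀ b n, b ≤ a n → g n b = if b ≤ n then g (n - b) 0 else 0 := by
    intro b
    induction b with
    | zero => intro n _; simp
    | succ b ih =>
      intro n hb
      match n with
      | 0 =>
        rw [if_neg (by omega)]
        have : ∀ ω, ((Z 0 (b+1) ω : ℕ) : ℝ≥0∞) = 0 := fun ω => by
          rw [hZ0 (b+1) (by omega) ω]; simp
        simp only [hg_def]
        rw [lintegral_congr this, lintegral_zero]
      | (n'+1) =>
        rw [hgshift n' (b+1) (by omega), if_pos hb,
          Nat.add_sub_cancel, ih n' (by have := hstep n'; omega)]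
        have : (b + 1 ≤ n' + 1) = (b ≤ n') := by simp
        rw [Nat.succ_sub_succ]
        by_cases hbn : b ≤ n'
        · rw [if_pos hbn, if_pos (by omega)]
        · rw [if_neg hbn, if_neg (by omega)]
  have hgM : ∀ n b, b ≤ a n → g n b ≤ M n := by
    intro n b hb
    exact Finset.single_le_sum (f := g n) (fun i _ => zero_le)
      (Finset.mem_range.mpr (by omega))
  have hg00 : g 0 0 = 1 := by
    have : ∀ ω, ((Z 0 0 ω : ℕ) : ℝ≥0∞) = 1 := fun ω => by rw [hZ00 ω]; simp
    simp only [hg_def]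
    rw [lintegral_congr this, lintegral_one, measure_univ]
  have hg0pos : ∀ n, 0 < g n 0 := by
    intro n
    induction n with
    | zero => rw [hg00]; exact one_pos
    | succ n ih =>
      rw [hFrec n]
      exact ENNReal.mul_pos hc0 (lt_of_lt_of_le ih (hgM n 0 (by omega))).ne'
  have hMpos : ∀ n, 0 < M n := fun n => lt_of_lt_of_le (hg0pos n) (hgM n 0 (by omega))
  have hMfin : ∀ n, M n ≠ ⊤ := by
    intro n
    induction n with
    | zero =>
      refine (ENNReal.sum_lt_top.mpr ?_).ne
      intro b _
      match b with
      | 0 => rw [hg00]; exact ENNReal.one_lt_top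
      | (b+1) =>
        have : ∀ ω, ((Z 0 (b+1) ω : ℕ) : ℝ≥0∞) = 0 := fun ω => by
          rw [hZ0 (b+1) (by omega) ω]; simp
        simp only [hg_def]
        rw [lintegral_congr this, lintegral_zero]
        exact ENNReal.zero_lt_top
    | succ n ih =>
      exact ((hupper n).trans_lt (ENNReal.mul_lt_top
        (by simp [hcT, lt_top_iff_ne_top]) (lt_top_iff_ne_top.mpr ih))).ne
  have hstep' : ∀ i t, a (i + t) ≤ a i + t := by
    intro i t
    induction t with
    | zero => simp
    | succ t ih => calc a (i + t + 1) ≤ a (i + t) + 1 := hstep _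
                     _ ≤ a i + t + 1 := by omega
  have hkey : ∀ n, (1 + c) ^ (a n) * g n (a n) ≤ M n := by
    intro n
    rw [hunwind (a n) n le_rfl]
    by_cases han : a n ≤ n
    · rw [if_pos han]
      set k := n - a n with hk
      -- S j lower bound on M j, and growth of S
      have hSM : ∀ j, k ≤ j → j ≤ n →
          (∑ b ∈ Finset.range (j - k + 1), g (j - b) 0) ≤ M j := by
        intro j hkj hjn
        have haj : j - k ≤ a j := by
          have := hstep' j (n - j)
          rw [Nat.add_sub_cancel' hjn] at this
          omega
        have hterm : ∀ b ∈ Finset.range (j - k + 1), g (j - b) 0 = g j b := by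
          intro b hb
          have hb' : b ≤ j - k := by have := Finset.mem_range.mp hb; omega
          rw [hunwind b j (by omega), if_pos (by omega)]
        rw [Finset.sum_congr rfl hterm]
        simp only [hM_def]
        refine Finset.sum_le_sum_of_subset (Finset.range_subset_range.mpr (by omega))
      have hgrow : ∀ d, k + d ≤ n →
          (1 + c) ^ d * g k 0 ≤ ∑ b ∈ Finset.range (k + d - k + 1), g (k + d - b) 0 := by
        intro d
        induction d with
        | zero => intro _; simp
        | succ d ih =>
          intro hdn
          have hd : k + d ≤ n := by omega
          have hsplit : (∑ b ∈ Finset.range (k + (d+1) - k + 1), g (k + (d+1) - b) 0)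
              = (∑ b ∈ Finset.range (k + d - k + 1), g (k + d - b) 0) + g (k + d + 1) 0 := by
            have h1 : k + (d+1) - k + 1 = (d + 1) + 1 := by omega
            have h2 : k + d - k + 1 = d + 1 := by omega
            rw [h1, h2, Finset.sum_range_succ' (fun b => g (k + (d+1) - b) 0) (d+1),
              show k + (d+1) - 0 = k + d + 1 from by omega]
            exact congrArg (· + g (k+d+1) 0) (Finset.sum_congr rfl
              (fun b hb => by rw [show k + (d+1) - (b+1) = k + d - b from by omega]))
          rw [hsplit]
          have hg1 : g (k + d + 1) 0 = c * M (k + d) := hFrec (k + d)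
          have hMS := hSM (k + d) (by omega) hd
          calc (1 + c) ^ (d+1) * g k 0 = (1 + c) * ((1 + c) ^ d * g k 0) := by ring
            _ ≤ (1 + c) * (∑ b ∈ Finset.range (k + d - k + 1), g (k + d - b) 0) := by
                exact mul_le_mul_right (ih hd) _
            _ = (∑ b ∈ Finset.range (k + d - k + 1), g (k + d - b) 0)
                + c * (∑ b ∈ Finset.range (k + d - k + 1), g (k + d - b) 0) := by ring
            _ ≤ (∑ b ∈ Finset.range (k + d - k + 1), g (k + d - b) 0) + g (k + d + 1) 0 := by
                rw [hg1]
                exact add_le_add le_rfl (mul_le_mul_right hMS c)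
      have hfin := hgrow (a n) (by omega)
      have hkan : k + a n = n := by omega
      rw [hkan] at hfin
      exact hfin.trans (hSM n (by omega) le_rfl)
    · rw [if_neg han, mul_zero]
      exact zero_le
  have h1cT : (1 + c) ≠ ⊤ := by simp [hcT]
  have htR : (1 + c).toReal = m + 1 := by
    rw [ENNReal.toReal_add ENNReal.one_ne_top hcT, ENNReal.toReal_one, hc_def,
      ENNReal.toReal_ofReal hm.le, add_comm]
  have hmspos : ∀ n, 0 < ms n := fun n => by
    rw [hmsM]; exact ENNReal.toReal_pos (hMpos n).ne' (hMfin n)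
  have hub : ∀ n, ms (n+1) / ms n ≤ m + 1 := by
    intro n
    rw [div_le_iff₀ (hmspos n)]
    have h := ENNReal.toReal_mono (ENNReal.mul_ne_top h1cT (hMfin n)) (hupper n)
    rw [ENNReal.toReal_mul, htR] at h
    rw [hmsM, hmsM]
    exact h
  have hlb : ∀ n, (m + 1) - ((m+1)⁻¹ : ℝ)^(a n) ≤ ms (n+1) / ms n := by
    intro n
    have hgfin : g n (a n) ≠ ⊤ := ne_top_of_le_ne_top (hMfin n) (hgM n (a n) le_rfl)
    have hA : (m+1) * ms n ≤ ms (n+1) + (g n (a n)).toReal := by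
      have h := ENNReal.toReal_mono (ENNReal.add_ne_top.mpr ⟨hMfin _, hgfin⟩) (hlower n)
      rw [ENNReal.toReal_mul, htR, ENNReal.toReal_add (hMfin _) hgfin] at h
      rw [hmsM, hmsM]
      exact h
    have hB : (m+1)^(a n) * (g n (a n)).toReal ≤ ms n := by
      have h := ENNReal.toReal_mono (hMfin n) (hkey n)
      rw [ENNReal.toReal_mul, ENNReal.toReal_pow, htR] at h
      rw [hmsM]
      exact h
    have hp : (0:ℝ) < (m+1)^(a n) := by positivity
    have hgr : (g n (a n)).toReal ≤ ((m+1)⁻¹:ℝ)^(a n) * ms n := by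
      rw [inv_pow, inv_mul_eq_div, le_div_iff₀ hp]
      calc (g n (a n)).toReal * (m+1)^(a n) = (m+1)^(a n) * (g n (a n)).toReal := by ring
        _ ≤ ms n := hB
    rw [le_div_iff₀ (hmspos n)]
    nlinarith [hA, hgr]
  have hmain : Tendsto (fun n : ℕ => ms (n + 1) / ms n) atTop (nhds (m + 1)) := by
    have hq : Tendsto (fun n : ℕ => ((m+1)⁻¹ : ℝ)^(a n)) atTop (nhds 0) := by
      refine (tendsto_pow_atTop_nhds_zero_of_lt_one (by positivity) ?_).comp hainf
      rw [inv_lt_one_iff₀]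
      right; linarith
    have hlow : Tendsto (fun n : ℕ => (m+1) - ((m+1)⁻¹:ℝ)^(a n)) atTop (nhds (m+1)) := by
      simpa using tendsto_const_nhds.sub hq
    exact tendsto_of_tendsto_of_tendsto_of_le_of_le hlow tendsto_const_nhds hlb hub
  refine ⟨hmain, ?_⟩
  have hinv : Tendsto (fun n : ℕ => ms n / ms (n+1)) atTop (nhds (m+1)⁻¹) := by
    have h := hmain.inv₀ (by positivity : (m+1:ℝ) ≠ 0)
    simpa [inv_div] using h
  intro k
  induction k with
  | zero =>
    simp only [Nat.sub_zero, pow_zero]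
    exact Tendsto.congr (fun n => (div_self (hmspos n).ne').symm) tendsto_const_nhds
  | succ k ih =>
    have h1 : Tendsto (fun n : ℕ => ms (n - (k+1)) / ms (n - k)) atTop (nhds (m+1)⁻¹) := by
      have h2 := hinv.comp (tendsto_sub_atTop_nat (k+1))
      refine h2.congr' ?_
      filter_upwards [eventually_ge_atTop (k+1)] with n hn
      have hnk : n - (k+1) + 1 = n - k := by omega
      simp only [Function.comp]
      rw [hnk]
    have h3 := h1.mul ih
    have h4 : (m+1:ℝ)⁻¹ * (m+1)⁻¹^k = (m+1)⁻¹^(k+1) := by ring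
    rw [h4] at h3
    exact h3.congr (fun n => div_mul_div_cancel₀ (hmspos (n-k)).ne')
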